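/- Let k ≥ 2 be an integer and let C : ℝ^P → ℝ be k times continuously differentiable such that all derivatives of C of orders 1 through k−1 vanish at 0 and M := sup_{x ∈ ℝ^P} ‖D^k C(x)‖ < ∞, where ‖D^k C(x)‖ is the operator norm of the k-th derivative of C at x as a k-linear map. Then for all x, y ∈ ℝ^P: (1) ‖∇C(x)‖ ≤ M ‖x‖^{k−1}/(k−1)!; (2) ‖∇C(x) − ∇C(y)‖ ≤ (M/(k−2)!) ‖x − y‖ (max{‖x‖, ‖y‖})^{k−2}. -/

import Mathlib

noncomputable section

open Set

/-- Key integration step: if `g 0 = 0` and `‖Dg y‖ ≤ A ‖y‖^m / m!`, then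
`‖g x‖ ≤ A ‖x‖^(m+1) / (m+1)!`. -/
lemma grad_key {E F : Type*} [NormedAddCommGroup E] [NormedSpace ℝ E]
    [NormedAddCommGroup F] [NormedSpace ℝ F]
    {g : E → F} (hg : Differentiable ℝ g) (hg0 : g 0 = 0) {A : ℝ} {m : ℕ}
    (hb : ∀ y, ‖fderiv ℝ g y‖ ≤ A * ‖y‖ ^ m / (m.factorial : ℝ)) (x : E) :
    ‖g x‖ ≤ A * ‖x‖ ^ (m + 1) / ((m + 1).factorial : ℝ) := by
  set f : ℝ → F := fun t => g (t • x) with hf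
  have hderiv : ∀ t : ℝ, HasDerivAt f (fderiv ℝ g (t • x) x) t := by
    intro t
    have h1 : HasDerivAt (fun t : ℝ => t • x) ((1 : ℝ) • x) t :=
      (hasDerivAt_id t).smul_const x
    rw [one_smul] at h1
    exact (hg (t • x)).hasFDerivAt.comp_hasDerivAt t h1
  set B : ℝ → ℝ := fun t => A * ‖x‖ ^ (m + 1) / ((m + 1).factorial : ℝ) * t ^ (m + 1) with hB
  set B' : ℝ → ℝ := fun t => A * ‖x‖ ^ (m + 1) / (m.factorial : ℝ) * t ^ m with hB'
  have hfac : ((m + 1).factorial : ℝ) = (m + 1) * (m.factorial : ℝ) := by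
    rw [Nat.factorial_succ]; push_cast; ring
  have hfacpos : (0 : ℝ) < (m.factorial : ℝ) := by exact_mod_cast m.factorial_pos
  have hBderiv : ∀ t : ℝ, HasDerivAt B (B' t) t := by
    intro t
    have h := (hasDerivAt_pow (m + 1) t).const_mul (A * ‖x‖ ^ (m + 1) / ((m + 1).factorial : ℝ))
    convert h using 1
    · rfl
    · rfl
    simp only [hB', hfac, Nat.add_sub_cancel]
    field_simp
    push_cast
    ring
  have hbound : ∀ t ∈ Ico (0 : ℝ) 1, ‖fderiv ℝ g (t • x) x‖ ≤ B' t := by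
    intro t ht
    have h1 : ‖fderiv ℝ g (t • x) x‖ ≤ ‖fderiv ℝ g (t • x)‖ * ‖x‖ :=
      (fderiv ℝ g (t • x)).le_opNorm x
    have h2 : ‖fderiv ℝ g (t • x)‖ * ‖x‖ ≤ (A * ‖t • x‖ ^ m / (m.factorial : ℝ)) * ‖x‖ :=
      mul_le_mul_of_nonneg_right (hb (t • x)) (norm_nonneg x)
    have h3 : ‖t • x‖ = t * ‖x‖ := by
      rw [norm_smul, Real.norm_eq_abs, abs_of_nonneg ht.1]
    have h4 : (A * ‖t • x‖ ^ m / (m.factorial : ℝ)) * ‖x‖ = B' t := by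
      rw [h3]; simp only [hB', mul_pow]; ring
    linarith
  have hcont : ContinuousOn f (Icc (0 : ℝ) 1) :=
    (hg.continuous.comp (continuous_id.smul continuous_const)).continuousOn
  have hf0 : ‖f 0‖ ≤ B 0 := by
    simp [hf, hB, hg0, zero_pow (Nat.succ_ne_zero m)]
  have key := image_norm_le_of_norm_deriv_right_le_deriv_boundary hcont
    (fun t ht => (hderiv t).hasDerivWithinAt) hf0 hBderiv hbound
    (right_mem_Icc.2 zero_le_one)
  simpa [hf, hB] using key

theorem gradient_bounds_from_kth_derivative
    (Pdim k : ℕ) (hk : 2 ≤ k)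
    (C : EuclideanSpace ℝ (Fin Pdim) → ℝ)
    (hC : ContDiff ℝ k C)
    (hvanish : ∀ n : ℕ, 1 ≤ n → n ≤ k - 1 → iteratedFDeriv ℝ n C 0 = 0)
    (M : ℝ)
    (hM : ∀ x, ‖iteratedFDeriv ℝ k C x‖ ≤ M) :
    ∀ x y : EuclideanSpace ℝ (Fin Pdim),
      ‖gradient C x‖ ≤ M * ‖x‖ ^ (k - 1) / ((k - 1).factorial : ℝ) ∧
      ‖gradient C x - gradient C y‖ ≤
        (M / ((k - 2).factorial : ℝ)) * ‖x - y‖ * max ‖x‖ ‖y‖ ^ (k - 2) := by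
  have hM0 : 0 ≤ M := le_trans (norm_nonneg _) (hM 0)
  -- main inductive claim
  have claim : ∀ j : ℕ, j ≤ k - 1 → ∀ x : EuclideanSpace ℝ (Fin Pdim),
      ‖iteratedFDeriv ℝ (k - j) C x‖ ≤ M * ‖x‖ ^ j / (j.factorial : ℝ) := by
    intro j
    induction j with
    | zero => intro _ x; simpa using hM x
    | succ j ih =>
      intro hj x
      have hj' : j ≤ k - 1 := le_trans (Nat.le_succ j) hj
      have hn1 : 1 ≤ k - (j + 1) := by omega
      have hn2 : k - (j + 1) ≤ k - 1 := by omega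
      have hn3 : k - (j + 1) + 1 = k - j := by omega
      have hnk : k - (j + 1) < k := by omega
      have hdiff : Differentiable ℝ (iteratedFDeriv ℝ (k - (j + 1)) C) :=
        hC.differentiable_iteratedFDeriv (by exact_mod_cast hnk)
      have h0 : iteratedFDeriv ℝ (k - (j + 1)) C 0 = 0 := hvanish _ hn1 hn2
      have hb : ∀ y : EuclideanSpace ℝ (Fin Pdim), ‖fderiv ℝ (iteratedFDeriv ℝ (k - (j + 1)) C) y‖ ≤
          M * ‖y‖ ^ j / (j.factorial : ℝ) := by
        intro y
        rw [norm_fderiv_iteratedFDeriv, hn3]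
        exact ih hj' y
      exact grad_key hdiff h0 hb x
  -- norm translations
  have hcur : ∀ z : EuclideanSpace ℝ (Fin Pdim),
      (continuousMultilinearCurryFin1 ℝ (EuclideanSpace ℝ (Fin Pdim)) ℝ) (iteratedFDeriv ℝ 1 C z) = fderiv ℝ C z := by
    intro z; ext v; simp [Fin.snoc]
  have hnorm1 : ∀ z : EuclideanSpace ℝ (Fin Pdim), ‖fderiv ℝ C z‖ = ‖iteratedFDeriv ℝ 1 C z‖ := by
    intro z; rw [← hcur, LinearIsometryEquiv.norm_map]
  have hnormsub : ∀ a b : EuclideanSpace ℝ (Fin Pdim), ‖fderiv ℝ C a - fderiv ℝ C b‖ =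
      ‖iteratedFDeriv ℝ 1 C a - iteratedFDeriv ℝ 1 C b‖ := by
    intro a b; rw [← hcur, ← hcur, ← map_sub, LinearIsometryEquiv.norm_map]
  have hgrad : ∀ z : EuclideanSpace ℝ (Fin Pdim), ‖gradient C z‖ = ‖fderiv ℝ C z‖ := by
    intro z; simp only [gradient, LinearIsometryEquiv.norm_map]
  have hgradsub : ∀ a b : EuclideanSpace ℝ (Fin Pdim), ‖gradient C a - gradient C b‖ =
      ‖fderiv ℝ C a - fderiv ℝ C b‖ := by
    intro a b; simp only [gradient]
    rw [← map_sub, LinearIsometryEquiv.norm_map]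
  intro x y
  constructor
  · -- part 1
    have h1 : k - (k - 1) = 1 := by omega
    have := claim (k - 1) le_rfl x
    rw [h1] at this
    rw [hgrad, hnorm1]
    exact this
  · -- part 2
    have hk2 : k - (k - 2) = 2 := by omega
    have hk2' : k - 2 ≤ k - 1 := by omega
    set R := max ‖x‖ ‖y‖ with hR
    set Cb := M / ((k - 2).factorial : ℝ) * R ^ (k - 2) with hCb
    have hfacpos : (0 : ℝ) < ((k - 2).factorial : ℝ) := by exact_mod_cast (k - 2).factorial_pos
    have hdiff1 : Differentiable ℝ (iteratedFDeriv ℝ 1 C) :=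
      hC.differentiable_iteratedFDeriv (by exact_mod_cast (by omega : 1 < k))
    have hbound : ∀ z ∈ segment ℝ y x, ‖fderiv ℝ (iteratedFDeriv ℝ 1 C) z‖ ≤ Cb := by
      intro z hz
      have hzle : ‖z‖ ≤ R := by
        obtain ⟨a, b, ha, hb, hab, rfl⟩ := hz
        calc ‖a • y + b • x‖ ≤ ‖a • y‖ + ‖b • x‖ := norm_add_le _ _
          _ = a * ‖y‖ + b * ‖x‖ := by
              rw [norm_smul, norm_smul, Real.norm_eq_abs, Real.norm_eq_abs,
                abs_of_nonneg ha, abs_of_nonneg hb]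
          _ ≤ a * R + b * R := by
              gcongr
              · exact le_max_right _ _
              · exact le_max_left _ _
          _ = R := by rw [← add_mul, hab, one_mul]
      have h2 : ‖fderiv ℝ (iteratedFDeriv ℝ 1 C) z‖ = ‖iteratedFDeriv ℝ 2 C z‖ :=
        norm_fderiv_iteratedFDeriv
      have h3 := claim (k - 2) hk2' z
      rw [hk2] at h3
      have h4 : M * ‖z‖ ^ (k - 2) / ((k - 2).factorial : ℝ) ≤ Cb := by
        rw [hCb, div_mul_eq_mul_div]
        gcongr
      rw [h2]; linarith
    have hmvt := (convex_segment y x).norm_image_sub_le_of_norm_fderiv_le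
      (fun z _ => hdiff1 z) hbound (left_mem_segment ℝ y x)
      (right_mem_segment ℝ y x)
    -- hmvt : ‖iteratedFDeriv ℝ 1 C x - iteratedFDeriv ℝ 1 C y‖ ≤ Cb * ‖x - y‖
    rw [hgradsub, hnormsub]
    calc ‖iteratedFDeriv ℝ 1 C x - iteratedFDeriv ℝ 1 C y‖ ≤ Cb * ‖x - y‖ := hmvt
      _ = M / ((k - 2).factorial : ℝ) * ‖x - y‖ * R ^ (k - 2) := by rw [hCb]; ring
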